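/- For any antisymmetric matrix A ∈ ℂ^{r×r}, the exponential of the quadratic Grassmann form equals the sum of Pfaffians of principal submatrices: exp((1/2) Σ_{j,k} A_{j,k} θ_j θ_k) = Σ_{x ∈ {0,1}^r} Pf(A_{|x}) θ_1^{x_1} θ_2^{x_2} ⋯ θ_r^{x_r}, where A_{|x} denotes the principal submatrix of A on the rows/columns j with x_j = 1. -/

import Mathlib

open scoped BigOperators
open Matrix

noncomputable section

/-- The Grassmann algebra on `n` anticommuting generators over `ℂ`,
realized as the exterior (Clifford with zero form) algebra on `Fin n → ℂ`. -/
abbrev Gr (n : ℕ) := CliffordAlgebra (0 : QuadraticForm ℂ (Fin n → ℂ))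

/-- The Grassmann generator `θ_i`. -/
def gen {n : ℕ} (i : Fin n) : Gr n :=
  CliffordAlgebra.ι (0 : QuadraticForm ℂ (Fin n → ℂ)) (Pi.single i 1)

/-- The ordered monomial `θ_1^{x_1} ⋯ θ_n^{x_n}`. -/
def gmono {n : ℕ} (x : Fin n → Bool) : Gr n :=
  ((List.finRange n).map (fun i => if x i then gen i else 1)).prod

/-- The (terminating) exponential power series in the Grassmann algebra. -/
def gexp {n : ℕ} (a : Gr n) : Gr n :=
  ∑ k ∈ Finset.range (n + 1), (k.factorial : ℂ)⁻¹ • a ^ k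

/-- The Pfaffian of an antisymmetric `n × n` complex matrix:
`0` for odd `n`, and `(2^m m!)⁻¹ Σ_σ sgn σ Π_i A_{σ(2i-1) σ(2i)}` for `n = 2m`
(in particular `1` for the empty matrix). -/
def pf {n : ℕ} (A : Matrix (Fin n) (Fin n) ℂ) : ℂ :=
  if h : Even n then
    ((2 : ℂ) ^ (n / 2) * ((n / 2).factorial : ℂ))⁻¹ *
      ∑ σ : Equiv.Perm (Fin n), ((Equiv.Perm.sign σ : ℤ) : ℂ) *
        ∏ i : Fin (n / 2),
          A (σ ⟨2 * i.1, by obtain ⟨k, hk⟩ := h; have := i.2; omega⟩)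
            (σ ⟨2 * i.1 + 1, by obtain ⟨k, hk⟩ := h; have := i.2; omega⟩)
  else 0

/-- The Pfaffian of the principal submatrix `A_{|x}` of `A` supported on the
indices `j` with `x j = true`. -/
def pfRestrict {r : ℕ} (A : Matrix (Fin r) (Fin r) ℂ) (x : Fin r → Bool) : ℂ :=
  pf (fun i j : Fin (Finset.univ.filter (fun j => x j = true)).card =>
    A (((Finset.univ.filter (fun j => x j = true)).orderIsoOfFin rfl) i)
      (((Finset.univ.filter (fun j => x j = true)).orderIsoOfFin rfl) j))

namespace GGaux

/-! ### Generic list/sum auxiliary lemmas -/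

def unpair {α : Type*} (k : ℕ) (h : Fin (2*k) → α) : Fin k → α × α :=
  fun i => (h ⟨2*i.1, by omega⟩, h ⟨2*i.1+1, by omega⟩)

def pairE (k : ℕ) (α : Type*) : (Fin (2*k) → α) ≃ (Fin k → α × α) where
  toFun := unpair k
  invFun g j := if j.1 % 2 = 0 then (g ⟨j.1/2, by omega⟩).1 else (g ⟨j.1/2, by omega⟩).2
  left_inv h := by
    funext j
    by_cases hj : j.1 % 2 = 0 <;> simp only [unpair, hj, if_true, if_false, reduceIte] <;>
      congr 1
    · exact Fin.ext (show 2*(j.1/2) = j.1 by omega)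
    · exact Fin.ext (show 2*(j.1/2)+1 = j.1 by omega)
  right_inv g := by
    funext i
    have h1 : (2*i.1) % 2 = 0 := by omega
    have h2 : ¬ ((2*i.1+1) % 2 = 0) := by omega
    simp only [unpair, h1, h2, if_true, if_false, reduceIte]
    have e1 : (⟨2*i.1/2, by omega⟩ : Fin k) = i := Fin.ext (show 2*i.1/2 = i.1 by omega)
    have e2 : (⟨(2*i.1+1)/2, by omega⟩ : Fin k) = i :=
      Fin.ext (show (2*i.1+1)/2 = i.1 by omega)
    rw [e1, e2]

lemma prod_pairs {M : Type*} [Monoid M] :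
    ∀ (k : ℕ) (h : Fin (2*k) → M),
      (List.ofFn fun i : Fin k => h ⟨2*i.1, by omega⟩ * h ⟨2*i.1+1, by omega⟩).prod
        = (List.ofFn h).prod := by
  intro k
  induction k with
  | zero => intro h; simp
  | succ k IH =>
    intro h
    have hL : (List.ofFn fun i : Fin (k+1) => h ⟨2*i.1, by omega⟩ * h ⟨2*i.1+1, by omega⟩)
        = (List.ofFn fun i : Fin k =>
            h ⟨2*i.1, by omega⟩ * h ⟨2*i.1+1, by omega⟩).concat
          (h ⟨2*k, by omega⟩ * h ⟨2*k+1, by omega⟩) := by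
      rw [List.ofFn_succ']
      rfl
    have hR : (List.ofFn h) =
        ((List.ofFn fun i : Fin (2*k) => h ⟨i.1, by omega⟩).concat (h ⟨2*k, by omega⟩)).concat
          (h ⟨2*k+1, by omega⟩) := by
      rw [List.ofFn_succ' (n := 2*k+1), List.ofFn_succ' (n := 2*k)]
      rfl
    rw [hL, hR, List.prod_concat, List.prod_concat, List.prod_concat,
      IH (fun i => h ⟨i.1, by omega⟩), mul_assoc]

lemma sum_pow_eq {R ι : Type*} [Semiring R] [Fintype ι] (f : ι → R) :
    ∀ k : ℕ, (∑ p : ι, f p) ^ k = ∑ g : Fin k → ι, (List.ofFn fun i => f (g i)).prod := by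
  intro k
  induction k with
  | zero =>
    rw [pow_zero, Fintype.sum_eq_single (fun i : Fin 0 => i.elim0)
      (fun g hg => absurd (funext fun i => i.elim0) hg)]
    simp
  | succ k IH =>
    calc (∑ p : ι, f p) ^ (k+1)
        = ∑ p : ι, ∑ g : Fin k → ι, f p * (List.ofFn fun i => f (g i)).prod := by
          rw [pow_succ', IH, Finset.sum_mul_sum]
      _ = ∑ pg : ι × (Fin k → ι), f pg.1 * (List.ofFn fun i => f (pg.2 i)).prod := by
          rw [Fintype.sum_prod_type]
      _ = ∑ g : Fin (k+1) → ι, (List.ofFn fun i => f (g i)).prod := by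
          apply Fintype.sum_equiv (Fin.consEquiv fun _ => ι)
          intro pg
          simp [List.ofFn_succ, Fin.consEquiv]

lemma ofFn_prod_smul {A M : Type*} [CommMonoid A] [Monoid M] [MulAction A M]
    [IsScalarTower A M M] [SMulCommClass A M M] :
    ∀ (k : ℕ) (c : Fin k → A) (w : Fin k → M),
      (List.ofFn fun i => c i • w i).prod = (∏ i, c i) • (List.ofFn w).prod := by
  intro k
  induction k with
  | zero => intro c w; simp
  | succ k IH =>
    intro c w
    rw [List.ofFn_succ, List.ofFn_succ, List.prod_cons, List.prod_cons, IH,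
      smul_mul_smul_comm, Fin.prod_univ_succ]

/-! ### Grassmann monomials -/

variable {r : ℕ}

def Th (n : ℕ) (h : Fin n → Fin r) : Gr r := (List.ofFn fun i => gen (h i)).prod

lemma Th_eq (n : ℕ) (h : Fin n → Fin r) :
    Th n h = ExteriorAlgebra.ιMulti ℂ n (fun i => Pi.single (h i) (1:ℂ)) := by
  rw [ExteriorAlgebra.ιMulti_apply]; rfl

lemma Th_zero {n} (h : Fin n → Fin r) (hi : ¬ Function.Injective h) : Th n h = 0 := by
  rw [Th_eq]
  simp only [Function.Injective, not_forall] at hi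
  obtain ⟨i, j, hij, hne⟩ := hi
  exact AlternatingMap.map_eq_zero_of_eq _ _ (by rw [hij]) hne

lemma Th_perm {n} (h : Fin n → Fin r) (σ : Equiv.Perm (Fin n)) :
    Th n (h ∘ σ) = ((Equiv.Perm.sign σ : ℤ) : ℂ) • Th n h := by
  rw [Th_eq, Th_eq]
  have := AlternatingMap.map_perm (ExteriorAlgebra.ιMulti ℂ n (M := Fin r → ℂ))
    (fun i => Pi.single (h i) (1:ℂ)) σ
  rw [Int.cast_smul_eq_zsmul]
  convert this using 2
  · rfl
  · rw [Units.smul_def]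

lemma Th_cast {n m : ℕ} (e : n = m) (h : Fin m → Fin r) :
    Th n (h ∘ Fin.cast e) = Th m h := by subst e; rfl

lemma list_prod_ite_filter {α M : Type*} [Monoid M] (p : α → Bool) (f : α → M) :
    ∀ l : List α, (l.map fun i => if p i then f i else 1).prod = ((l.filter p).map f).prod := by
  intro l
  induction l with
  | nil => simp
  | cons a l IH =>
    by_cases h : p a <;> simp [List.filter_cons, h, IH]

lemma sort_filter_eq (x : Fin r → Bool) :
    (Finset.univ.filter (fun j => x j = true)).sort (· ≤ ·)
      = (List.finRange r).filter (fun j => x j) := by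
  refine (fun hp hs => List.Perm.eq_of_pairwise' (Finset.pairwise_sort _ _) hs hp) ?_ ?_
  · apply (List.perm_ext_iff_of_nodup (Finset.sort_nodup _ _)
      ((List.nodup_finRange r).filter _)).2
    intro a
    simp [Finset.mem_sort, List.mem_filter]
  · exact ((List.pairwise_lt_finRange r).sublist List.filter_sublist).imp le_of_lt

/-- support cardinality -/
def csupp (x : Fin r → Bool) : ℕ := (Finset.univ.filter (fun j => x j = true)).card

/-- enumeration of the support in increasing order -/
def ordx (x : Fin r → Bool) (i : Fin (csupp x)) : Fin r :=
  (Finset.univ.filter (fun j => x j = true)).orderEmbOfFin rfl i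

lemma ordx_mem (x : Fin r → Bool) (i : Fin (csupp x)) : x (ordx x i) = true := by
  have := Finset.orderEmbOfFin_mem (Finset.univ.filter (fun j => x j = true)) rfl i
  simpa [ordx] using (Finset.mem_filter.1 this).2

lemma ordx_injective (x : Fin r → Bool) : Function.Injective (ordx x) :=
  fun a b hab => (Finset.orderEmbOfFin _ rfl).injective hab

lemma ordx_symm (x : Fin r → Bool) (s : ↥(Finset.univ.filter (fun j => x j = true))) :
    ordx x (((Finset.univ.filter (fun j => x j = true)).orderIsoOfFin rfl).symm s) = ↑s := by
  unfold ordx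
  rw [← Finset.coe_orderIsoOfFin_apply, OrderIso.apply_symm_apply]

lemma gmono_eq (x : Fin r → Bool) : gmono x = Th (csupp x) (ordx x) := by
  unfold gmono Th
  rw [list_prod_ite_filter, ← sort_filter_eq]
  congr 1
  apply List.ext_getElem
  · simp [csupp]
  · intro n h1 h2
    simp only [List.getElem_map, List.getElem_ofFn]
    congr 1

lemma pfRestrict_eq (A : Matrix (Fin r) (Fin r) ℂ) (x : Fin r → Bool) :
    pfRestrict A x = pf (fun i j => A (ordx x i) (ordx x j)) := rfl

/-! ### the summands -/

variable (A : Matrix (Fin r) (Fin r) ℂ)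

def tm (k : ℕ) (h : Fin (2*k) → Fin r) : Gr r :=
  ((k.factorial : ℂ) * 2^k)⁻¹ •
    ((∏ i : Fin k, A (h ⟨2*i.1, by omega⟩) (h ⟨2*i.1+1, by omega⟩)) • Th (2*k) h)

def vm (p : Σ x : Fin r → Bool, Equiv.Perm (Fin (csupp x))) : Gr r :=
  (((2:ℂ) ^ (csupp p.1 / 2) * ((csupp p.1 / 2).factorial : ℂ))⁻¹ *
    (((Equiv.Perm.sign p.2 : ℤ) : ℂ) *
      ∏ i : Fin (csupp p.1 / 2),
        A (ordx p.1 (p.2 ⟨2*i.1, by omega⟩)) (ordx p.1 (p.2 ⟨2*i.1+1, by omega⟩)))) • gmono p.1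

lemma pf_smul_gmono (x : Fin r → Bool) (he : Even (csupp x)) :
    pfRestrict A x • gmono x = ∑ σ : Equiv.Perm (Fin (csupp x)), vm A ⟨x, σ⟩ := by
  rw [pfRestrict_eq]
  unfold pf
  rw [dif_pos he]
  unfold vm
  rw [Finset.mul_sum, Finset.sum_smul]


def suppx {n : ℕ} (h : Fin n → Fin r) : Fin r → Bool := fun j => decide (∃ i, h i = j)

lemma suppx_filter_eq {n : ℕ} (h : Fin n → Fin r) :
    (Finset.univ.filter (fun j => suppx h j = true)) = Finset.image h Finset.univ := by
  ext j; simp [suppx]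

lemma csupp_suppx {n : ℕ} (h : Fin n → Fin r) (hinj : Function.Injective h) :
    csupp (suppx h) = n := by
  rw [csupp, suppx_filter_eq, Finset.card_image_of_injective _ hinj, Finset.card_univ,
    Fintype.card_fin]

lemma range_ordx (x : Fin r → Bool) (σ : Equiv.Perm (Fin (csupp x))) {n : ℕ}
    (e : n = csupp x) (j : Fin r) :
    (∃ i : Fin n, ordx x (σ (Fin.cast e i)) = j) ↔ x j = true := by
  constructor
  · rintro ⟨i, rfl⟩; exact ordx_mem _ _
  · intro hj
    refine ⟨Fin.cast e.symm (σ.symm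
      (((Finset.univ.filter (fun j' => x j' = true)).orderIsoOfFin rfl).symm
        ⟨j, Finset.mem_filter.2 ⟨Finset.mem_univ _, hj⟩⟩)), ?_⟩
    have h1 : Fin.cast e (Fin.cast e.symm (σ.symm
        (((Finset.univ.filter (fun j' => x j' = true)).orderIsoOfFin rfl).symm
          ⟨j, Finset.mem_filter.2 ⟨Finset.mem_univ _, hj⟩⟩))) = σ.symm
        (((Finset.univ.filter (fun j' => x j' = true)).orderIsoOfFin rfl).symm
          ⟨j, Finset.mem_filter.2 ⟨Finset.mem_univ _, hj⟩⟩) := Fin.ext rfl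
    rw [h1]
    erw [Equiv.apply_symm_apply]
    rw [ordx_symm]

lemma collect (k : ℕ) :
    (∑ h : Fin (2*k) → Fin r, tm A k h)
      = ∑ x ∈ Finset.univ.filter (fun x : Fin r → Bool => csupp x = 2*k),
          pfRestrict A x • gmono x := by
  classical
  -- drop non-injective terms
  have hz : ∑ h ∈ Finset.univ.filter (fun h : Fin (2*k) → Fin r => ¬ Function.Injective h),
      tm A k h = 0 := Finset.sum_eq_zero (fun h hh => by
    rw [tm, Th_zero _ (Finset.mem_filter.1 hh).2]; simp)
  rw [← Finset.sum_filter_add_sum_filter_not Finset.univ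
      (fun h : Fin (2*k) → Fin r => Function.Injective h) (tm A k), hz, add_zero]
  -- expand the Pfaffians on the right
  rw [Finset.sum_congr rfl (fun x hx => pf_smul_gmono A x
      ⟨k, by have := (Finset.mem_filter.1 hx).2; omega⟩),
    ← Finset.sum_sigma]
  symm
  apply Finset.sum_bij (i := fun (p : Σ x : Fin r → Bool, Equiv.Perm (Fin (csupp x))) hp =>
    fun j : Fin (2*k) => ordx p.1 (p.2 (Fin.cast
      (((Finset.mem_filter.1 (Finset.mem_sigma.1 hp).1).2).symm) j)))
  -- membership
  case hi =>
    intro p hp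
    refine Finset.mem_filter.2 ⟨Finset.mem_univ _, ?_⟩
    intro a b hab
    have h1 := p.2.injective (ordx_injective p.1 hab)
    have h3 : (Fin.cast (((Finset.mem_filter.1 (Finset.mem_sigma.1 hp).1).2).symm) a).val
        = (Fin.cast (((Finset.mem_filter.1 (Finset.mem_sigma.1 hp).1).2).symm) b).val :=
      congrArg Fin.val h1
    exact Fin.ext h3
  -- injectivity
  case i_inj =>
    rintro ⟨x, σ⟩ hp ⟨y, τ⟩ hq hfun
    have hc : csupp x = 2*k := (Finset.mem_filter.1 (Finset.mem_sigma.1 hp).1).2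
    have hd : csupp y = 2*k := (Finset.mem_filter.1 (Finset.mem_sigma.1 hq).1).2
    have hxy : x = y := by
      funext j
      have h1 := range_ordx x σ hc.symm j
      have h2 := range_ordx y τ hd.symm j
      rw [Bool.eq_iff_iff]
      rw [← h1, ← h2]
      constructor
      · rintro ⟨i, hi⟩; exact ⟨i, by rw [← congrFun hfun i]; exact hi⟩
      · rintro ⟨i, hi⟩; exact ⟨i, by rw [congrFun hfun i]; exact hi⟩
    subst hxy
    have hστ : σ = τ := by
      apply Equiv.ext
      intro i
      have h1 := congrFun hfun (Fin.cast hc i)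
      have h2 : Fin.cast hc.symm (Fin.cast hc i) = i := Fin.ext rfl
      rw [h2] at h1
      exact ordx_injective x h1
    rw [hστ]
  -- surjectivity
  case i_surj =>
    intro h hh
    have hinj : Function.Injective h := (Finset.mem_filter.1 hh).2
    have hcs : csupp (suppx h) = 2*k := csupp_suppx h hinj
    have hmem : ∀ i : Fin (csupp (suppx h)), h (Fin.cast hcs i) ∈
        Finset.univ.filter (fun j => suppx h j = true) :=
      fun i => Finset.mem_filter.2 ⟨Finset.mem_univ _, decide_eq_true ⟨_, rfl⟩⟩
    set T := Finset.univ.filter (fun j => suppx h j = true) with hT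
    have hbij : Function.Bijective (fun i : Fin (csupp (suppx h)) =>
        (T.orderIsoOfFin rfl).symm ⟨h (Fin.cast hcs i), hmem i⟩) := by
      rw [Fintype.bijective_iff_injective_and_card]
      refine ⟨?_, rfl⟩
      intro a b hab
      have h1 := (T.orderIsoOfFin rfl).symm.injective hab
      have h2 : h (Fin.cast hcs a) = h (Fin.cast hcs b) := congrArg Subtype.val h1
      have h3 : (Fin.cast hcs a).val = (Fin.cast hcs b).val := congrArg Fin.val (hinj h2)
      exact Fin.ext h3
    refine ⟨⟨suppx h, Equiv.ofBijective _ hbij⟩,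
      Finset.mem_sigma.2 ⟨Finset.mem_filter.2 ⟨Finset.mem_univ _, hcs⟩, Finset.mem_univ _⟩, ?_⟩
    funext j
    show ordx (suppx h) ((Equiv.ofBijective _ hbij) (Fin.cast _ j)) = h j
    rw [Equiv.ofBijective_apply, ordx_symm]
    exact congrArg h (Fin.ext rfl)
  -- values
  case h =>
    rintro ⟨x, σ⟩ hp
    have hc : csupp x = 2*k := (Finset.mem_filter.1 (Finset.mem_sigma.1 hp).1).2
    have hk2 : csupp x / 2 = k := by omega
    unfold vm tm
    dsimp only
    have hTh : Th (2*k) (fun j : Fin (2*k) => ordx x (σ (Fin.cast hc.symm j)))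
        = ((Equiv.Perm.sign σ : ℤ) : ℂ) • Th (csupp x) (ordx x) := by
      have h1 : (fun j : Fin (2*k) => ordx x (σ (Fin.cast hc.symm j)))
          = ((ordx x) ∘ σ) ∘ Fin.cast hc.symm := rfl
      rw [h1, Th_cast hc.symm ((ordx x) ∘ σ), Th_perm]
    have hprod : (∏ i : Fin (csupp x / 2),
          A (ordx x (σ ⟨2*i.1, by omega⟩)) (ordx x (σ ⟨2*i.1+1, by omega⟩)))
        = ∏ i : Fin k,
            A (ordx x (σ (Fin.cast hc.symm ⟨2*i.1, by omega⟩)))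
              (ordx x (σ (Fin.cast hc.symm ⟨2*i.1+1, by omega⟩))) := by
      apply Fintype.prod_equiv (finCongr hk2)
      intro i
      congr 1 <;> exact congrArg (ordx x) (congrArg σ (Fin.ext rfl))
    rw [hprod, gmono_eq, hTh,
      show ((2:ℂ) ^ (csupp x / 2) * ((csupp x / 2).factorial : ℂ))⁻¹
          = ((2:ℂ)^k * (k.factorial : ℂ))⁻¹ by rw [hk2]]
    rw [smul_smul, smul_smul]
    congr 1
    ring

end GGaux

open GGaux

/-- for antisymmetric `A`,
`exp((1/2) Σ_{j,k} A_{j,k} θ_j θ_k) = Σ_{x ∈ {0,1}^r} Pf(A_{|x}) θ_1^{x_1}⋯θ_r^{x_r}`. -/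
theorem gaussian_grassmann_pfaffian_expansion (r : ℕ) (A : Matrix (Fin r) (Fin r) ℂ)
    (hA : Aᵀ = -A) :
    gexp ((2 : ℂ)⁻¹ • ∑ j : Fin r, ∑ k : Fin r, A j k • (gen j * gen k)) =
      ∑ x : Fin r → Bool, pfRestrict A x • gmono x := by
  classical
  -- step 1 : the quadratic element as a single sum
  have ha : ∑ p : Fin r × Fin r, ((2:ℂ)⁻¹ * A p.1 p.2) • (gen p.1 * gen p.2)
      = (2 : ℂ)⁻¹ • ∑ j : Fin r, ∑ k : Fin r, A j k • (gen j * gen k) := by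
    rw [Fintype.sum_prod_type, Finset.smul_sum]
    refine Finset.sum_congr rfl (fun j _ => ?_)
    rw [Finset.smul_sum]
    exact Finset.sum_congr rfl (fun k _ => (smul_smul _ _ _).symm)
  rw [← ha, gexp]
  -- step 2 : expand each power
  have hpow : ∀ k : ℕ,
      ((k.factorial : ℂ))⁻¹ •
          (∑ p : Fin r × Fin r, ((2:ℂ)⁻¹ * A p.1 p.2) • (gen p.1 * gen p.2)) ^ k
        = ∑ h : Fin (2*k) → Fin r, tm A k h := by
    intro k
    rw [sum_pow_eq (fun p : Fin r × Fin r => ((2:ℂ)⁻¹ * A p.1 p.2) • (gen p.1 * gen p.2)) k,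
      ← Equiv.sum_comp (pairE k (Fin r))
        (fun g : Fin k → Fin r × Fin r => (List.ofFn fun i =>
          ((2:ℂ)⁻¹ * A (g i).1 (g i).2) • (gen (g i).1 * gen (g i).2)).prod),
      Finset.smul_sum]
    refine Finset.sum_congr rfl (fun h _ => ?_)
    have h1 : (List.ofFn fun i : Fin k =>
          ((2:ℂ)⁻¹ * A ((pairE k (Fin r)) h i).1 ((pairE k (Fin r)) h i).2) •
            (gen ((pairE k (Fin r)) h i).1 * gen ((pairE k (Fin r)) h i).2)).prod
        = (∏ i : Fin k, ((2:ℂ)⁻¹ * A (h ⟨2*i.1, by omega⟩) (h ⟨2*i.1+1, by omega⟩))) •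
            (List.ofFn fun i : Fin k =>
              gen (h ⟨2*i.1, by omega⟩) * gen (h ⟨2*i.1+1, by omega⟩)).prod :=
      ofFn_prod_smul k _ _
    rw [h1, prod_pairs k (fun j => gen (h j)), smul_smul]
    conv_rhs => rw [tm, smul_smul]
    congr 1
    rw [Finset.prod_mul_distrib, Finset.prod_const, Finset.card_univ, Fintype.card_fin,
      mul_inv, ← inv_pow]
    ring
  -- step 3 : each power sum collects into restricted Pfaffians, then regroup
  rw [Finset.sum_congr rfl (fun k _ => (hpow k).trans (collect A k))]
  -- step 4 : regroup the right-hand side by support cardinality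
  rw [← Finset.sum_filter_add_sum_filter_not Finset.univ
    (fun x : Fin r → Bool => Even (csupp x)) (fun x => pfRestrict A x • gmono x)]
  have hodd : ∑ x ∈ Finset.univ.filter (fun x : Fin r → Bool => ¬ Even (csupp x)),
      pfRestrict A x • gmono x = 0 :=
    Finset.sum_eq_zero fun x hx => by
      rw [pfRestrict_eq]
      unfold pf
      rw [dif_neg (Finset.mem_filter.1 hx).2, zero_smul]
  rw [hodd, add_zero]
  rw [← Finset.sum_fiberwise_of_maps_to (g := fun x : Fin r → Bool => csupp x / 2)
    (t := Finset.range (r+1)) (fun x _ => Finset.mem_range.2 (by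
      show csupp x / 2 < r + 1
      have h1 : csupp x ≤ r := by
        have := Finset.card_filter_le Finset.univ (fun j : Fin r => x j = true)
        simpa [csupp] using this
      omega)) (fun x => pfRestrict A x • gmono x)]
  refine Finset.sum_congr rfl (fun k _ => ?_)
  refine Finset.sum_congr ?_ (fun _ _ => rfl)
  ext x
  simp only [Finset.mem_filter, Finset.mem_univ, true_and, Nat.even_iff]
  omega
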